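/- If h'_{m+1,m} = 0 in the inverted Arnoldi process applied to A⁻¹ (invariant subspace) and H'_m is invertible, then e^{hA} v = ‖v‖ V_m e^{h (H'_m)⁻¹} e₁ for all h. -/

import Mathlib

open Matrix NormedSpace

section Aux

attribute [local instance]
  Matrix.linftyOpNormedAddCommGroup Matrix.linftyOpNormedRing
  Matrix.linftyOpNormedAlgebra

lemma exp_intertwine {n m : ℕ} (A : Matrix (Fin n) (Fin n) ℝ)
    (B : Matrix (Fin m) (Fin m) ℝ) (V : Matrix (Fin n) (Fin m) ℝ)
    (hAV : A * V = V * B) : exp A * V = V * exp B := by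
  have hpow : ∀ k : ℕ, A ^ k * V = V * B ^ k := by
    intro k
    induction k with
    | zero => simp
    | succ k ih =>
        rw [pow_succ', pow_succ', Matrix.mul_assoc, ih, ← Matrix.mul_assoc, hAV, Matrix.mul_assoc]
  let f : Matrix (Fin n) (Fin n) ℝ →L[ℝ] Matrix (Fin n) (Fin m) ℝ :=
    LinearMap.toContinuousLinearMap
      { toFun := fun X => X * V
        map_add' := fun X Y => Matrix.add_mul X Y V
        map_smul' := fun c X => Matrix.smul_mul c X V }
  let g : Matrix (Fin m) (Fin m) ℝ →L[ℝ] Matrix (Fin n) (Fin m) ℝ :=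
    LinearMap.toContinuousLinearMap
      { toFun := fun Y => V * Y
        map_add' := fun X Y => Matrix.mul_add V X Y
        map_smul' := fun c X => Matrix.mul_smul V c X }
  have hf : exp A * V = f (exp A) := rfl
  have hg : V * exp B = g (exp B) := rfl
  rw [hf, hg, exp_eq_tsum (𝕂 := ℝ), exp_eq_tsum (𝕂 := ℝ),
    f.map_tsum (expSeries_summable' (𝕂 := ℝ) A),
    g.map_tsum (expSeries_summable' (𝕂 := ℝ) B)]
  refine tsum_congr fun k => ?_
  show (((Nat.factorial k : ℝ))⁻¹ • A ^ k) * V = V * (((Nat.factorial k : ℝ))⁻¹ • B ^ k)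
  rw [Matrix.smul_mul, Matrix.mul_smul, hpow k]

end Aux

/-- Exactness of the inverted Krylov approximation at an invariant subspace:
if `A⁻¹ V_m = V_m H'_m` (i.e. `h'_{m+1,m} = 0`) with `A` and `H'_m` invertible,
`V_m` with orthonormal columns and `v = ‖v‖ V_m e₁`, then
`e^{hA} v = ‖v‖ V_m e^{h (H'_m)⁻¹} e₁` for all `h`. -/
theorem stmt10 {n m : ℕ} (hm : 0 < m)
    (A : Matrix (Fin n) (Fin n) ℝ) (hA : IsUnit A.det)
    (V : Matrix (Fin n) (Fin m) ℝ) (H' : Matrix (Fin m) (Fin m) ℝ)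
    (hH' : IsUnit H'.det)
    (v : Fin n → ℝ) (hv : v ≠ 0)
    (horth : Vᵀ * V = 1)
    (harnoldi : A⁻¹ * V = V * H')
    (hv1 : v = ‖v‖ • V.mulVec (Pi.single ⟨0, hm⟩ 1)) :
    ∀ h : ℝ,
      (exp (h • A)).mulVec v =
        ‖v‖ • V.mulVec ((exp (h • H'⁻¹)).mulVec (Pi.single ⟨0, hm⟩ 1)) := by
  have hVeq : V = A * V * H' := by
    calc V = (A * A⁻¹) * V := by rw [Matrix.mul_nonsing_inv A hA, Matrix.one_mul]
    _ = A * (A⁻¹ * V) := by rw [Matrix.mul_assoc]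
    _ = A * (V * H') := by rw [harnoldi]
    _ = A * V * H' := by rw [Matrix.mul_assoc]
  have hAV : A * V = V * H'⁻¹ := by
    calc A * V = A * V * (H' * H'⁻¹) := by
          rw [Matrix.mul_nonsing_inv H' hH', Matrix.mul_one]
    _ = (A * V * H') * H'⁻¹ := by rw [← Matrix.mul_assoc]
    _ = V * H'⁻¹ := by rw [← hVeq]
  intro h
  have hAVh : (h • A) * V = V * (h • H'⁻¹) := by
    rw [Matrix.smul_mul, Matrix.mul_smul, hAV]
  have hexp := exp_intertwine (h • A) (h • H'⁻¹) V hAVh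
  conv_lhs => rw [hv1]
  rw [Matrix.mulVec_smul, Matrix.mulVec_mulVec, hexp, ← Matrix.mulVec_mulVec]
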